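/- Assume there are normal-arrows v₁ ⟶ v₂ and v₂ ⟶ v₁ in Γ̃ and the cycle v₁, v₂ is α-type with associated length n and vertices a_i := b_{n−i+1}, a'_i := b'_i. Let Ψ := φ_{v₂}^{-1}∘φ_{v₁} and Ψ' := φ_{v₂}∘φ_{v₁}^{-1}, and define X := {x ∈ V(Γ)∖{a₁,…,a_n} : Ψ(x) ≠ x}, Y := {y ∈ V(Γ)∖{a₁,…,a_n} : Ψ(y) = y}, X' := {x' ∈ V(Γ')∖{a'₁,…,a'_n} : Ψ'(x') ≠ x'}, Y' := {y' ∈ V(Γ')∖{a'₁,…,a'_n} : Ψ'(y') = y'}. Then for each i = 1, 2: φ_{v_i}(X) = X' and φ_{v_i}(Y) = Y', and φ_{v_i} restricts to a graph isomorphism from the induced subgraph of Γ on X onto the induced subgraph of Γ' on X', and from the induced subgraph of Γ on Y onto the induced subgraph of Γ' on Y'. -/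

import Mathlib

/-- Property (*): a bijection `f` between the vertex sets together with, for every vertex `v`,
a fixed isomorphism `φ v` from `Γ − v` onto `Γ' − f v` (encoded as an adjacency-preserving
bijection between the vertex sets with `v`, resp. `f v`, removed). -/
structure RCSetup {V V' : Type*} (G : SimpleGraph V) (G' : SimpleGraph V') where
  f : V ≃ V'
  φ : ∀ v : V, {w : V // w ≠ v} ≃ {w' : V' // w' ≠ f v}
  adj_iff : ∀ (v : V) (x y : {w : V // w ≠ v}),
    G.Adj x.1 y.1 ↔ G'.Adj (φ v x).1 (φ v y).1

variable {V V' : Type*} {G : SimpleGraph V} {G' : SimpleGraph V'}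

/-- There is a normal-arrow `v₁ ⟶ v₂` in the associated directed graph. -/
def RCSetup.Normal (H : RCSetup G G') (v₁ v₂ : V) : Prop :=
  ∃ h : v₂ ≠ v₁, ¬ G.Adj v₁ v₂ ∧ G'.Adj (H.f v₁) (H.φ v₁ ⟨v₂, h⟩).1

/-- There is a dashed-arrow `v₁ ⇢ v₂` in the associated directed graph. -/
def RCSetup.Dashed (H : RCSetup G G') (v₁ v₂ : V) : Prop :=
  ∃ h : H.f v₂ ≠ H.f v₁, ¬ G'.Adj (H.f v₁) (H.f v₂) ∧ G.Adj v₁ ((H.φ v₁).symm ⟨H.f v₂, h⟩).1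

open Classical

/-- Partial version of `φ v`: defined on every vertex except `v` itself. -/
noncomputable def RCSetup.pphi (H : RCSetup G G') (v x : V) : Option V' :=
  if h : x ≠ v then some (H.φ v ⟨x, h⟩).1 else none

/-- Partial version of `(φ v)⁻¹`: defined on every vertex except `f v` itself. -/
noncomputable def RCSetup.pphiInv (H : RCSetup G G') (v : V) (x' : V') : Option V :=
  if h : x' ≠ H.f v then some ((H.φ v).symm ⟨x', h⟩).1 else none

/-- The partial sequence `(b'_i)` in `V'` attached to the cycle `v₁, v₂`:
`b'₁ = f v₁`, `b'₂ = φ_{v₁}(v₂)`, and `b'_{i+2} = φ_{v₁}(φ_{v₂}⁻¹(b'_i))`, a term being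
`none` (blank) whenever an intermediate value leaves the domain of the next map. -/
noncomputable def RCSetup.bp (H : RCSetup G G') (v₁ v₂ : V) : ℕ → Option V'
  | 0 => none
  | 1 => some (H.f v₁)
  | 2 => H.pphi v₁ v₂
  | (i + 3) => ((H.bp v₁ v₂ (i + 1)).bind (H.pphiInv v₂)).bind (H.pphi v₁)

/-- The partial sequence `(b_i)` in `V` attached to the cycle `v₁, v₂`:
`b₁ = v₂`, `b₂ = φ_{v₂}⁻¹(f v₁)`, and `b_{i+2} = φ_{v₂}⁻¹(φ_{v₁}(b_i))`, a term being
`none` (blank) whenever an intermediate value leaves the domain of the next map. -/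
noncomputable def RCSetup.bq (H : RCSetup G G') (v₁ v₂ : V) : ℕ → Option V
  | 0 => none
  | 1 => some v₂
  | 2 => H.pphiInv v₂ (H.f v₁)
  | (i + 3) => ((H.bq v₁ v₂ (i + 1)).bind (H.pphi v₁)).bind (H.pphiInv v₂)

/-- The cycle `v₁, v₂` is α-type with associated length `n`: the terms `b'_i` and `b_i` are
defined exactly for `1 ≤ i ≤ n`, with `b'_n = f v₂` and `b_n = v₁`. -/
def RCSetup.AlphaTwo (H : RCSetup G G') (v₁ v₂ : V) (n : ℕ) : Prop :=
  (∀ i : ℕ, 1 ≤ i → i ≤ n → (H.bp v₁ v₂ i).isSome ∧ (H.bq v₁ v₂ i).isSome) ∧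
  (∀ i : ℕ, n < i → H.bp v₁ v₂ i = none ∧ H.bq v₁ v₂ i = none) ∧
  H.bp v₁ v₂ n = some (H.f v₂) ∧ H.bq v₁ v₂ n = some v₁

/-- The partial map `Ψ = φ_{v₂}⁻¹ ∘ φ_{v₁}` on `V`. -/
noncomputable def RCSetup.psiPart (H : RCSetup G G') (v₁ v₂ : V) (x : V) : Option V :=
  (H.pphi v₁ x).bind (H.pphiInv v₂)

/-- The partial map `Ψ' = φ_{v₂} ∘ φ_{v₁}⁻¹` on `V'`. -/
noncomputable def RCSetup.psiPart' (H : RCSetup G G') (v₁ v₂ : V) (x' : V') : Option V' :=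
  (H.pphiInv v₁ x').bind (H.pphi v₂)

namespace RCSetup
variable {V V' : Type*} {G : SimpleGraph V} {G' : SimpleGraph V'}

lemma cr (H : RCSetup G G') (v₁ v₂ : V) :
    ∀ i : ℕ, H.bq v₁ v₂ (i+2) = (H.bp v₁ v₂ (i+1)).bind (H.pphiInv v₂)
  | 0 => by simp [bq, bp, pphi]
  | 1 => by simp [show (3:ℕ) = 1 + 2 from rfl, bq, bp]
  | (i+2) => by
      show H.bq v₁ v₂ ((i+1)+3) = (H.bp v₁ v₂ (i+3)).bind _
      rw [bq, bp, cr H v₁ v₂ i]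

lemma cr' (H : RCSetup G G') (v₁ v₂ : V) :
    ∀ i : ℕ, H.bp v₁ v₂ (i+2) = (H.bq v₁ v₂ (i+1)).bind (H.pphi v₁)
  | 0 => by simp [bq, bp, pphi]
  | (i+1) => by
      show H.bp v₁ v₂ (i+3) = (H.bq v₁ v₂ (i+2)).bind _
      rw [bp, cr H v₁ v₂ i]

end RCSetup
namespace RCSetup

lemma pphi_pos (H : RCSetup G G') (v x : V) (h : x ≠ v) :
    H.pphi v x = some ((H.φ v ⟨x, h⟩).1) := dif_pos h

lemma pphiInv_pos (H : RCSetup G G') (v : V) (x' : V') (h : x' ≠ H.f v) :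
    H.pphiInv v x' = some (((H.φ v).symm ⟨x', h⟩).1) := dif_pos h

lemma pphi_eq_some (H : RCSetup G G') {v x : V} {y : V'} (h : H.pphi v x = some y) :
    ∃ hx : x ≠ v, (H.φ v ⟨x, hx⟩).1 = y := by
  unfold pphi at h
  split at h
  · exact ⟨‹x ≠ v›, Option.some_injective _ h⟩
  · simp at h

lemma pphiInv_eq_some (H : RCSetup G G') {v : V} {x' : V'} {y : V}
    (h : H.pphiInv v x' = some y) :
    ∃ hx : x' ≠ H.f v, ((H.φ v).symm ⟨x', hx⟩).1 = y := by
  unfold pphiInv at h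
  split at h
  · exact ⟨‹x' ≠ H.f v›, Option.some_injective _ h⟩
  · simp at h

lemma transfer (H : RCSetup G G') (v : V) (S : Set V) (S' : Set V')
    (hS : ∀ x ∈ S, x ≠ v) (hS' : ∀ x' ∈ S', x' ≠ H.f v)
    (fwd : ∀ x (hx : x ∈ S), (H.φ v ⟨x, hS x hx⟩).1 ∈ S')
    (bwd : ∀ x' (hx' : x' ∈ S'), ((H.φ v).symm ⟨x', hS' x' hx'⟩).1 ∈ S) :
    (H.pphi v '' S = some '' S') ∧
    ∃ ψ : G.induce S ≃g G'.induce S',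
      ∀ x (hx : x ∈ S), H.pphi v x = some ((ψ ⟨x, hx⟩).1) := by
  have hval : ∀ x' (hx' : x' ∈ S'),
      (H.φ v ⟨((H.φ v).symm ⟨x', hS' x' hx'⟩).1,
        hS _ (bwd x' hx')⟩).1 = x' := by
    intro x' hx'
    exact congrArg Subtype.val ((H.φ v).apply_symm_apply ⟨x', hS' x' hx'⟩)
  constructor
  · ext y
    constructor
    · rintro ⟨x, hx, rfl⟩
      exact ⟨(H.φ v ⟨x, hS x hx⟩).1, fwd x hx, (H.pphi_pos v x (hS x hx)).symm⟩
    · rintro ⟨x', hx', rfl⟩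
      refine ⟨((H.φ v).symm ⟨x', hS' x' hx'⟩).1, bwd x' hx', ?_⟩
      rw [H.pphi_pos v _ (hS _ (bwd x' hx')), hval x' hx']
  · have hbij : Function.Bijective (fun x : ↥S => (⟨(H.φ v ⟨x.1, hS x.1 x.2⟩).1, fwd x.1 x.2⟩ : ↥S')) := by
      constructor
      · intro a b hab
        have h1 : (H.φ v ⟨a.1, hS a.1 a.2⟩).1 = (H.φ v ⟨b.1, hS b.1 b.2⟩).1 :=
          congrArg (fun z : ↥S' => z.1) hab
        have h2 : (⟨a.1, hS a.1 a.2⟩ : {w : V // w ≠ v}) = ⟨b.1, hS b.1 b.2⟩ :=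
          (H.φ v).injective (Subtype.ext h1)
        exact Subtype.ext (congrArg (fun z : {w : V // w ≠ v} => z.1) h2)
      · intro x'
        refine ⟨⟨((H.φ v).symm ⟨x'.1, hS' x'.1 x'.2⟩).1, bwd x'.1 x'.2⟩, ?_⟩
        exact Subtype.ext (hval x'.1 x'.2)
    refine ⟨⟨Equiv.ofBijective _ hbij, ?_⟩, ?_⟩
    · intro x y
      exact (H.adj_iff v ⟨x.1, hS x.1 x.2⟩ ⟨y.1, hS y.1 y.2⟩).symm
    · intro x hx
      exact H.pphi_pos v x (hS x hx)

end RCSetup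
namespace RCSetup

/-- `x` is one of the vertices `a_1, …, a_n` (i.e. a value of the sequence `b`). -/
def InA (H : RCSetup G G') (v₁ v₂ : V) (n : ℕ) (x : V) : Prop :=
  ∃ i : ℕ, 1 ≤ i ∧ i ≤ n ∧ H.bq v₁ v₂ i = some x

/-- `x'` is one of the vertices `a'_1, …, a'_n` (i.e. a value of the sequence `b'`). -/
def InA' (H : RCSetup G G') (v₁ v₂ : V) (n : ℕ) (x' : V') : Prop :=
  ∃ i : ℕ, 1 ≤ i ∧ i ≤ n ∧ H.bp v₁ v₂ i = some x'

lemma F1 (H : RCSetup G G') (v₁ v₂ : V) (n : ℕ)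
    (hbqn : H.bq v₁ v₂ n = some v₁) :
    ∀ (x : V) (h : x ≠ v₁), H.InA v₁ v₂ n x → H.InA' v₁ v₂ n (H.φ v₁ ⟨x, h⟩).1 := by
  rintro x hx ⟨i, h1, h2, hbq⟩
  rcases eq_or_lt_of_le h2 with rfl | hlt
  · rw [hbqn] at hbq
    exact absurd (Option.some_injective _ hbq).symm hx
  · obtain ⟨j, rfl⟩ : ∃ j, i = j + 1 := ⟨i - 1, by omega⟩
    refine ⟨j + 2, by omega, by omega, ?_⟩
    rw [H.cr' v₁ v₂ j, hbq]
    exact H.pphi_pos v₁ x hx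

lemma F2 (H : RCSetup G G') (v₁ v₂ : V) (n : ℕ) :
    ∀ (x : V) (h : x ≠ v₂), H.InA v₁ v₂ n x → H.InA' v₁ v₂ n (H.φ v₂ ⟨x, h⟩).1 := by
  rintro x hx ⟨i, h1, h2, hbq⟩
  rcases Nat.lt_or_ge i 2 with hlt | hge
  · have : i = 1 := by omega
    subst this
    have : x = v₂ := (Option.some_injective _ hbq).symm
    exact absurd this hx
  · obtain ⟨j, rfl⟩ : ∃ j, i = j + 2 := ⟨i - 2, by omega⟩
    rw [H.cr v₁ v₂ j] at hbq
    obtain ⟨x', hbp, hinv⟩ := Option.bind_eq_some_iff.mp hbq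
    obtain ⟨hne, hval⟩ := H.pphiInv_eq_some hinv
    refine ⟨j + 1, by omega, by omega, ?_⟩
    rw [hbp]
    congr 1
    have : (⟨x, hx⟩ : {w : V // w ≠ v₂}) = (H.φ v₂).symm ⟨x', hne⟩ := Subtype.ext hval.symm
    rw [this]
    exact (congrArg Subtype.val ((H.φ v₂).apply_symm_apply ⟨x', hne⟩)).symm

lemma G1 (H : RCSetup G G') (v₁ v₂ : V) (n : ℕ) :
    ∀ (x' : V') (h : x' ≠ H.f v₁), H.InA' v₁ v₂ n x' →
      H.InA v₁ v₂ n ((H.φ v₁).symm ⟨x', h⟩).1 := by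
  rintro x' hx' ⟨i, h1, h2, hbp⟩
  rcases Nat.lt_or_ge i 2 with hlt | hge
  · have : i = 1 := by omega
    subst this
    exact absurd (Option.some_injective _ hbp).symm hx'
  · obtain ⟨j, rfl⟩ : ∃ j, i = j + 2 := ⟨i - 2, by omega⟩
    rw [H.cr' v₁ v₂ j] at hbp
    obtain ⟨x, hbq, hphi⟩ := Option.bind_eq_some_iff.mp hbp
    obtain ⟨hne, hval⟩ := H.pphi_eq_some hphi
    refine ⟨j + 1, by omega, by omega, ?_⟩
    rw [hbq]
    congr 1
    have : (⟨x', hx'⟩ : {w' : V' // w' ≠ H.f v₁}) = H.φ v₁ ⟨x, hne⟩ := Subtype.ext hval.symm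
    rw [this]
    exact (congrArg Subtype.val ((H.φ v₁).symm_apply_apply ⟨x, hne⟩)).symm

lemma G2 (H : RCSetup G G') (v₁ v₂ : V) (n : ℕ)
    (hbpn : H.bp v₁ v₂ n = some (H.f v₂)) :
    ∀ (x' : V') (h : x' ≠ H.f v₂), H.InA' v₁ v₂ n x' →
      H.InA v₁ v₂ n ((H.φ v₂).symm ⟨x', h⟩).1 := by
  rintro x' hx' ⟨i, h1, h2, hbp⟩
  rcases eq_or_lt_of_le h2 with rfl | hlt
  · rw [hbpn] at hbp
    exact absurd (Option.some_injective _ hbp).symm hx'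
  · obtain ⟨j, rfl⟩ : ∃ j, i = j + 1 := ⟨i - 1, by omega⟩
    refine ⟨j + 2, by omega, by omega, ?_⟩
    rw [H.cr v₁ v₂ j, hbp]
    exact H.pphiInv_pos v₂ x' hx'

end RCSetup
namespace RCSetup

lemma keymem (H : RCSetup G G') (v₁ v₂ : V) (n : ℕ) (hn1 : 1 ≤ n)
    (hbpn : H.bp v₁ v₂ n = some (H.f v₂)) (hbqn : H.bq v₁ v₂ n = some v₁) :
    ∀ x : V, ¬ H.InA v₁ v₂ n x → x ≠ v₁ ∧ x ≠ v₂ ∧ ∃ x₁' x₂' : V',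
      H.pphi v₁ x = some x₁' ∧ H.pphi v₂ x = some x₂' ∧
      ¬ H.InA' v₁ v₂ n x₁' ∧ ¬ H.InA' v₁ v₂ n x₂' ∧
      (H.psiPart v₁ v₂ x = some x ↔ x₁' = x₂') ∧
      (H.psiPart' v₁ v₂ x₁' = some x₁' ↔ x₁' = x₂') ∧
      (H.psiPart' v₁ v₂ x₂' = some x₂' ↔ x₁' = x₂') := by
  intro x hx
  have hbq1 : H.bq v₁ v₂ 1 = some v₂ := rfl
  have hbp1 : H.bp v₁ v₂ 1 = some (H.f v₁) := rfl
  have hv₁A : H.InA v₁ v₂ n v₁ := ⟨n, hn1, le_rfl, hbqn⟩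
  have hv₂A : H.InA v₁ v₂ n v₂ := ⟨1, le_rfl, hn1, hbq1⟩
  have hfv₁A : H.InA' v₁ v₂ n (H.f v₁) := ⟨1, le_rfl, hn1, hbp1⟩
  have hfv₂A : H.InA' v₁ v₂ n (H.f v₂) := ⟨n, hn1, le_rfl, hbpn⟩
  have h1 : x ≠ v₁ := fun e => hx (e ▸ hv₁A)
  have h2 : x ≠ v₂ := fun e => hx (e ▸ hv₂A)
  have hA1' : ¬ H.InA' v₁ v₂ n (H.φ v₁ ⟨x, h1⟩).1 := by
    intro hA
    apply hx
    have := H.G1 v₁ v₂ n _ (H.φ v₁ ⟨x, h1⟩).2 hA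
    rwa [show ((H.φ v₁).symm ⟨(H.φ v₁ ⟨x, h1⟩).1, (H.φ v₁ ⟨x, h1⟩).2⟩).1 = x from
      congrArg Subtype.val ((H.φ v₁).symm_apply_apply ⟨x, h1⟩)] at this
  have hA2' : ¬ H.InA' v₁ v₂ n (H.φ v₂ ⟨x, h2⟩).1 := by
    intro hA
    apply hx
    have := H.G2 v₁ v₂ n hbpn _ (H.φ v₂ ⟨x, h2⟩).2 hA
    rwa [show ((H.φ v₂).symm ⟨(H.φ v₂ ⟨x, h2⟩).1, (H.φ v₂ ⟨x, h2⟩).2⟩).1 = x from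
      congrArg Subtype.val ((H.φ v₂).symm_apply_apply ⟨x, h2⟩)] at this
  refine ⟨h1, h2, (H.φ v₁ ⟨x, h1⟩).1, (H.φ v₂ ⟨x, h2⟩).1,
    H.pphi_pos v₁ x h1, H.pphi_pos v₂ x h2, hA1', hA2', ?_, ?_, ?_⟩
  -- psiPart iff
  · have hne2 : (H.φ v₁ ⟨x, h1⟩).1 ≠ H.f v₂ := fun e => hA1' (e ▸ hfv₂A)
    have e0 : H.psiPart v₁ v₂ x = some (((H.φ v₂).symm ⟨(H.φ v₁ ⟨x, h1⟩).1, hne2⟩).1) := by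
      unfold psiPart
      rw [H.pphi_pos v₁ x h1, Option.bind_some]
      exact H.pphiInv_pos v₂ _ hne2
    rw [e0, Option.some_inj]
    constructor
    · intro h
      have h' : (H.φ v₂).symm ⟨(H.φ v₁ ⟨x, h1⟩).1, hne2⟩ = ⟨x, h2⟩ := Subtype.ext h
      exact congrArg Subtype.val (((H.φ v₂).symm_apply_eq).mp h')
    · intro h
      have h' : (⟨(H.φ v₁ ⟨x, h1⟩).1, hne2⟩ : {w' : V' // w' ≠ H.f v₂}) = H.φ v₂ ⟨x, h2⟩ :=
        Subtype.ext h
      exact congrArg Subtype.val (((H.φ v₂).symm_apply_eq).mpr h')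
  -- psiPart' at x₁'
  · have e1 : H.psiPart' v₁ v₂ (H.φ v₁ ⟨x, h1⟩).1 = some ((H.φ v₂ ⟨x, h2⟩).1) := by
      unfold psiPart'
      rw [H.pphiInv_pos v₁ _ (H.φ v₁ ⟨x, h1⟩).2, Option.bind_some]
      rw [show ((H.φ v₁).symm ⟨(H.φ v₁ ⟨x, h1⟩).1, (H.φ v₁ ⟨x, h1⟩).2⟩).1 = x from
        congrArg Subtype.val ((H.φ v₁).symm_apply_apply ⟨x, h1⟩)]
      exact H.pphi_pos v₂ x h2
    rw [e1, Option.some_inj]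
    exact eq_comm
  -- psiPart' at x₂'
  · have hne1 : (H.φ v₂ ⟨x, h2⟩).1 ≠ H.f v₁ := fun e => hA2' (e ▸ hfv₁A)
    have hyv₂ : ((H.φ v₁).symm ⟨(H.φ v₂ ⟨x, h2⟩).1, hne1⟩).1 ≠ v₂ := by
      intro e
      apply hA2'
      have hAy : H.InA v₁ v₂ n ((H.φ v₁).symm ⟨(H.φ v₂ ⟨x, h2⟩).1, hne1⟩).1 := by
        rw [e]; exact hv₂A
      have := H.F1 v₁ v₂ n hbqn _ ((H.φ v₁).symm ⟨(H.φ v₂ ⟨x, h2⟩).1, hne1⟩).2 hAy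
      rwa [show (H.φ v₁ ⟨((H.φ v₁).symm ⟨(H.φ v₂ ⟨x, h2⟩).1, hne1⟩).1,
            ((H.φ v₁).symm ⟨(H.φ v₂ ⟨x, h2⟩).1, hne1⟩).2⟩).1 = (H.φ v₂ ⟨x, h2⟩).1 from
        congrArg Subtype.val ((H.φ v₁).apply_symm_apply ⟨(H.φ v₂ ⟨x, h2⟩).1, hne1⟩)] at this
    have e2 : H.psiPart' v₁ v₂ (H.φ v₂ ⟨x, h2⟩).1
        = some ((H.φ v₂ ⟨((H.φ v₁).symm ⟨(H.φ v₂ ⟨x, h2⟩).1, hne1⟩).1, hyv₂⟩).1) := by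
      unfold psiPart'
      rw [H.pphiInv_pos v₁ _ hne1, Option.bind_some]
      exact H.pphi_pos v₂ _ hyv₂
    rw [e2, Option.some_inj]
    constructor
    · intro h
      have h' : (⟨((H.φ v₁).symm ⟨(H.φ v₂ ⟨x, h2⟩).1, hne1⟩).1, hyv₂⟩ : {w : V // w ≠ v₂})
          = ⟨x, h2⟩ := (H.φ v₂).injective (Subtype.ext h)
      have hyx : ((H.φ v₁).symm ⟨(H.φ v₂ ⟨x, h2⟩).1, hne1⟩).1 = x := congrArg Subtype.val h'
      have h'' : (⟨(H.φ v₂ ⟨x, h2⟩).1, hne1⟩ : {w' : V' // w' ≠ H.f v₁}) = H.φ v₁ ⟨x, h1⟩ := by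
        rw [← ((H.φ v₁).apply_symm_apply ⟨(H.φ v₂ ⟨x, h2⟩).1, hne1⟩)]
        congr 1
        exact Subtype.ext hyx
      exact (congrArg Subtype.val h'').symm
    · intro h
      have h'' : (⟨(H.φ v₂ ⟨x, h2⟩).1, hne1⟩ : {w' : V' // w' ≠ H.f v₁}) = H.φ v₁ ⟨x, h1⟩ :=
        Subtype.ext h.symm
      have hyx : ((H.φ v₁).symm ⟨(H.φ v₂ ⟨x, h2⟩).1, hne1⟩).1 = x := by
        rw [h'']
        exact congrArg Subtype.val ((H.φ v₁).symm_apply_apply ⟨x, h1⟩)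
      have h3 : (⟨((H.φ v₁).symm ⟨(H.φ v₂ ⟨x, h2⟩).1, hne1⟩).1, hyv₂⟩ : {w : V // w ≠ v₂})
          = ⟨x, h2⟩ := Subtype.ext hyx
      rw [h3]

end RCSetup
namespace RCSetup

lemma keymem' (H : RCSetup G G') (v₁ v₂ : V) (n : ℕ) (hn1 : 1 ≤ n)
    (hbpn : H.bp v₁ v₂ n = some (H.f v₂)) (hbqn : H.bq v₁ v₂ n = some v₁) :
    ∀ x' : V', ¬ H.InA' v₁ v₂ n x' → x' ≠ H.f v₁ ∧ x' ≠ H.f v₂ ∧ ∃ x₁ x₂ : V,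
      H.pphiInv v₁ x' = some x₁ ∧ H.pphiInv v₂ x' = some x₂ ∧
      ¬ H.InA v₁ v₂ n x₁ ∧ ¬ H.InA v₁ v₂ n x₂ ∧
      H.pphi v₁ x₁ = some x' ∧ H.pphi v₂ x₂ = some x' ∧
      (H.psiPart' v₁ v₂ x' = some x' ↔ H.psiPart v₁ v₂ x₁ = some x₁) ∧
      (H.psiPart' v₁ v₂ x' = some x' ↔ H.psiPart v₁ v₂ x₂ = some x₂) := by
  intro x' hx'
  have hfv₁A : H.InA' v₁ v₂ n (H.f v₁) := ⟨1, le_rfl, hn1, rfl⟩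
  have hfv₂A : H.InA' v₁ v₂ n (H.f v₂) := ⟨n, hn1, le_rfl, hbpn⟩
  have h1' : x' ≠ H.f v₁ := fun e => hx' (by rw [e]; exact hfv₁A)
  have h2' : x' ≠ H.f v₂ := fun e => hx' (by rw [e]; exact hfv₂A)
  have hval1 : (H.φ v₁ ⟨((H.φ v₁).symm ⟨x', h1'⟩).1, ((H.φ v₁).symm ⟨x', h1'⟩).2⟩).1 = x' :=
    congrArg Subtype.val ((H.φ v₁).apply_symm_apply ⟨x', h1'⟩)
  have hval2 : (H.φ v₂ ⟨((H.φ v₂).symm ⟨x', h2'⟩).1, ((H.φ v₂).symm ⟨x', h2'⟩).2⟩).1 = x' :=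
    congrArg Subtype.val ((H.φ v₂).apply_symm_apply ⟨x', h2'⟩)
  have hA1 : ¬ H.InA v₁ v₂ n ((H.φ v₁).symm ⟨x', h1'⟩).1 := by
    intro hA
    apply hx'
    have := H.F1 v₁ v₂ n hbqn _ ((H.φ v₁).symm ⟨x', h1'⟩).2 hA
    rwa [hval1] at this
  have hA2 : ¬ H.InA v₁ v₂ n ((H.φ v₂).symm ⟨x', h2'⟩).1 := by
    intro hA
    apply hx'
    have := H.F2 v₁ v₂ n _ ((H.φ v₂).symm ⟨x', h2'⟩).2 hA
    rwa [hval2] at this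
  have hp1 : H.pphi v₁ ((H.φ v₁).symm ⟨x', h1'⟩).1 = some x' := by
    rw [H.pphi_pos v₁ _ ((H.φ v₁).symm ⟨x', h1'⟩).2, hval1]
  have hp2 : H.pphi v₂ ((H.φ v₂).symm ⟨x', h2'⟩).1 = some x' := by
    rw [H.pphi_pos v₂ _ ((H.φ v₂).symm ⟨x', h2'⟩).2, hval2]
  refine ⟨h1', h2', ((H.φ v₁).symm ⟨x', h1'⟩).1, ((H.φ v₂).symm ⟨x', h2'⟩).1,
    H.pphiInv_pos v₁ x' h1', H.pphiInv_pos v₂ x' h2', hA1, hA2, hp1, hp2, ?_, ?_⟩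
  · obtain ⟨-, -, y₁', y₂', kp1, kp2, -, -, ke0, ke1, -⟩ :=
      H.keymem v₁ v₂ n hn1 hbpn hbqn _ hA1
    have : y₁' = x' := by
      rw [hp1] at kp1
      exact (Option.some_injective _ kp1).symm
    subst this
    exact ke1.trans ke0.symm
  · obtain ⟨-, -, y₁', y₂', kp1, kp2, -, -, ke0, -, ke2⟩ :=
      H.keymem v₁ v₂ n hn1 hbpn hbqn _ hA2
    have : y₂' = x' := by
      rw [hp2] at kp2
      exact (Option.some_injective _ kp2).symm
    subst this
    exact ke2.trans ke0.symm

end RCSetup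
/-- Suppose there are normal-arrows `v₁ ⟶ v₂` and `v₂ ⟶ v₁` and the cycle `v₁, v₂` is
α-type with associated length `n` and vertices `a_i := b_{n−i+1}`, `a'_i := b'_i`.  With
`Ψ := φ_{v₂}⁻¹∘φ_{v₁}`, `Ψ' := φ_{v₂}∘φ_{v₁}⁻¹`,
`X := {x ∈ V(Γ)∖{a₁,…,a_n} : Ψ(x) ≠ x}`, `Y := {y ∈ V(Γ)∖{a₁,…,a_n} : Ψ(y) = y}`,
`X' := {x' ∈ V(Γ')∖{a'₁,…,a'_n} : Ψ'(x') ≠ x'}` and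
`Y' := {y' ∈ V(Γ')∖{a'₁,…,a'_n} : Ψ'(y') = y'}`, each of `φ_{v₁}` and `φ_{v₂}` maps `X`
onto `X'` and `Y` onto `Y'`, and restricts to graph isomorphisms `X ≅ X'` and `Y ≅ Y'`
(induced subgraphs). -/
theorem stmt_17 [Fintype V] [Fintype V']
    (h3 : 3 ≤ Fintype.card V) (h3' : 3 ≤ Fintype.card V')
    (H : RCSetup G G') (v₁ v₂ : V)
    (hN1 : H.Normal v₁ v₂) (hN2 : H.Normal v₂ v₁)
    (n : ℕ) (hα : H.AlphaTwo v₁ v₂ n)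
    (a : ℕ → V) (a' : ℕ → V')
    (ha : ∀ i : ℕ, 1 ≤ i → i ≤ n → H.bq v₁ v₂ (n - i + 1) = some (a i))
    (ha' : ∀ i : ℕ, 1 ≤ i → i ≤ n → H.bp v₁ v₂ i = some (a' i))
    (Xs Ys : Set V) (Xs' Ys' : Set V')
    (hX : Xs = {x : V | (∀ i : ℕ, 1 ≤ i → i ≤ n → x ≠ a i) ∧ H.psiPart v₁ v₂ x ≠ some x})
    (hY : Ys = {y : V | (∀ i : ℕ, 1 ≤ i → i ≤ n → y ≠ a i) ∧ H.psiPart v₁ v₂ y = some y})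
    (hX' : Xs' = {x' : V' | (∀ i : ℕ, 1 ≤ i → i ≤ n → x' ≠ a' i) ∧
      H.psiPart' v₁ v₂ x' ≠ some x'})
    (hY' : Ys' = {y' : V' | (∀ i : ℕ, 1 ≤ i → i ≤ n → y' ≠ a' i) ∧
      H.psiPart' v₁ v₂ y' = some y'}) :
    (H.pphi v₁ '' Xs = some '' Xs') ∧ (H.pphi v₂ '' Xs = some '' Xs') ∧
    (H.pphi v₁ '' Ys = some '' Ys') ∧ (H.pphi v₂ '' Ys = some '' Ys') ∧
    (∃ ψ : G.induce Xs ≃g G'.induce Xs',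
      ∀ (x : V) (hx : x ∈ Xs), H.pphi v₁ x = some (ψ ⟨x, hx⟩).1) ∧
    (∃ ψ : G.induce Xs ≃g G'.induce Xs',
      ∀ (x : V) (hx : x ∈ Xs), H.pphi v₂ x = some (ψ ⟨x, hx⟩).1) ∧
    (∃ ψ : G.induce Ys ≃g G'.induce Ys',
      ∀ (y : V) (hy : y ∈ Ys), H.pphi v₁ y = some (ψ ⟨y, hy⟩).1) ∧
    (∃ ψ : G.induce Ys ≃g G'.induce Ys',
      ∀ (y : V) (hy : y ∈ Ys), H.pphi v₂ y = some (ψ ⟨y, hy⟩).1) := by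
  obtain ⟨hdef, hundef, hbpn, hbqn⟩ := hα
  have hn1 : 1 ≤ n := by
    rcases Nat.eq_zero_or_pos n with h | h
    · exfalso; rw [h] at hbqn; exact nomatch (show (none : Option V) = some v₁ from hbqn)
    · exact h
  -- bridges between the `a`-form complements and `InA`/`InA'`
  have hbr : ∀ x : V, (∀ i : ℕ, 1 ≤ i → i ≤ n → x ≠ a i) ↔ ¬ H.InA v₁ v₂ n x := by
    intro x
    constructor
    · rintro h ⟨j, hj1, hjn, hbj⟩
      have h2 := ha (n - j + 1) (by omega) (by omega)
      rw [show n - (n - j + 1) + 1 = j by omega, hbj] at h2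
      exact h (n - j + 1) (by omega) (by omega) (Option.some_injective _ h2)
    · intro h i h1i hin hxa
      exact h ⟨n - i + 1, by omega, by omega, by
        rw [ha i h1i hin, hxa]⟩
  have hbr' : ∀ x' : V', (∀ i : ℕ, 1 ≤ i → i ≤ n → x' ≠ a' i) ↔ ¬ H.InA' v₁ v₂ n x' := by
    intro x'
    constructor
    · rintro h ⟨j, hj1, hjn, hbj⟩
      have h2 := ha' j hj1 hjn
      rw [hbj] at h2
      exact h j hj1 hjn (Option.some_injective _ h2)
    · intro h i h1i hin hxa
      exact h ⟨i, h1i, hin, by rw [ha' i h1i hin, hxa]⟩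
  subst hX hY hX' hY'
  have key := H.keymem v₁ v₂ n hn1 hbpn hbqn
  have key' := H.keymem' v₁ v₂ n hn1 hbpn hbqn
  -- basic side conditions
  have hSX1 : ∀ x ∈ {x : V | (∀ i : ℕ, 1 ≤ i → i ≤ n → x ≠ a i) ∧
      H.psiPart v₁ v₂ x ≠ some x}, x ≠ v₁ :=
    fun x hx => (key x ((hbr x).1 hx.1)).1
  have hSX2 : ∀ x ∈ {x : V | (∀ i : ℕ, 1 ≤ i → i ≤ n → x ≠ a i) ∧
      H.psiPart v₁ v₂ x ≠ some x}, x ≠ v₂ :=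
    fun x hx => (key x ((hbr x).1 hx.1)).2.1
  have hSY1 : ∀ x ∈ {x : V | (∀ i : ℕ, 1 ≤ i → i ≤ n → x ≠ a i) ∧
      H.psiPart v₁ v₂ x = some x}, x ≠ v₁ :=
    fun x hx => (key x ((hbr x).1 hx.1)).1
  have hSY2 : ∀ x ∈ {x : V | (∀ i : ℕ, 1 ≤ i → i ≤ n → x ≠ a i) ∧
      H.psiPart v₁ v₂ x = some x}, x ≠ v₂ :=
    fun x hx => (key x ((hbr x).1 hx.1)).2.1
  have hSX1' : ∀ x' ∈ {x' : V' | (∀ i : ℕ, 1 ≤ i → i ≤ n → x' ≠ a' i) ∧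
      H.psiPart' v₁ v₂ x' ≠ some x'}, x' ≠ H.f v₁ :=
    fun x' hx' => (key' x' ((hbr' x').1 hx'.1)).1
  have hSX2' : ∀ x' ∈ {x' : V' | (∀ i : ℕ, 1 ≤ i → i ≤ n → x' ≠ a' i) ∧
      H.psiPart' v₁ v₂ x' ≠ some x'}, x' ≠ H.f v₂ :=
    fun x' hx' => (key' x' ((hbr' x').1 hx'.1)).2.1
  have hSY1' : ∀ x' ∈ {x' : V' | (∀ i : ℕ, 1 ≤ i → i ≤ n → x' ≠ a' i) ∧
      H.psiPart' v₁ v₂ x' = some x'}, x' ≠ H.f v₁ :=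
    fun x' hx' => (key' x' ((hbr' x').1 hx'.1)).1
  have hSY2' : ∀ x' ∈ {x' : V' | (∀ i : ℕ, 1 ≤ i → i ≤ n → x' ≠ a' i) ∧
      H.psiPart' v₁ v₂ x' = some x'}, x' ≠ H.f v₂ :=
    fun x' hx' => (key' x' ((hbr' x').1 hx'.1)).2.1
  have fwdX1 : ∀ x (hx : x ∈ {x : V | (∀ i : ℕ, 1 ≤ i → i ≤ n → x ≠ a i) ∧ H.psiPart v₁ v₂ x ≠ some x}), (H.φ v₁ ⟨x, hSX1 x hx⟩).1 ∈ {x' : V' | (∀ i : ℕ, 1 ≤ i → i ≤ n → x' ≠ a' i) ∧ H.psiPart' v₁ v₂ x' ≠ some x'} := by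
    intro x hx
    obtain ⟨h1, h2, x₁', x₂', kp1, kp2, kA1, kA2, ke0, ke1, ke2⟩ := key x ((hbr x).1 hx.1)
    have hv : (H.φ v₁ ⟨x, hSX1 x hx⟩).1 = x₁' := by
      rw [H.pphi_pos v₁ x (hSX1 x hx)] at kp1
      exact Option.some_injective _ kp1
    rw [hv]
    exact ⟨(hbr' x₁').2 kA1, fun hcon => hx.2 (ke0.mpr (ke1.mp hcon))⟩
  have bwdX1 : ∀ x' (hx' : x' ∈ {x' : V' | (∀ i : ℕ, 1 ≤ i → i ≤ n → x' ≠ a' i) ∧ H.psiPart' v₁ v₂ x' ≠ some x'}), ((H.φ v₁).symm ⟨x', hSX1' x' hx'⟩).1 ∈ {x : V | (∀ i : ℕ, 1 ≤ i → i ≤ n → x ≠ a i) ∧ H.psiPart v₁ v₂ x ≠ some x} := by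
    intro x' hx'
    obtain ⟨h1', h2', x₁, x₂, kq1, kq2, kA1, kA2, kp1, kp2, ke1, ke2⟩ :=
      key' x' ((hbr' x').1 hx'.1)
    have hv : ((H.φ v₁).symm ⟨x', hSX1' x' hx'⟩).1 = x₁ := by
      rw [H.pphiInv_pos v₁ x' (hSX1' x' hx')] at kq1
      exact Option.some_injective _ kq1
    rw [hv]
    exact ⟨(hbr x₁).2 kA1, fun hcon => hx'.2 (ke1.mpr hcon)⟩
  have fwdX2 : ∀ x (hx : x ∈ {x : V | (∀ i : ℕ, 1 ≤ i → i ≤ n → x ≠ a i) ∧ H.psiPart v₁ v₂ x ≠ some x}), (H.φ v₂ ⟨x, hSX2 x hx⟩).1 ∈ {x' : V' | (∀ i : ℕ, 1 ≤ i → i ≤ n → x' ≠ a' i) ∧ H.psiPart' v₁ v₂ x' ≠ some x'} := by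
    intro x hx
    obtain ⟨h1, h2, x₁', x₂', kp1, kp2, kA1, kA2, ke0, ke1, ke2⟩ := key x ((hbr x).1 hx.1)
    have hv : (H.φ v₂ ⟨x, hSX2 x hx⟩).1 = x₂' := by
      rw [H.pphi_pos v₂ x (hSX2 x hx)] at kp2
      exact Option.some_injective _ kp2
    rw [hv]
    exact ⟨(hbr' x₂').2 kA2, fun hcon => hx.2 (ke0.mpr (ke2.mp hcon))⟩
  have bwdX2 : ∀ x' (hx' : x' ∈ {x' : V' | (∀ i : ℕ, 1 ≤ i → i ≤ n → x' ≠ a' i) ∧ H.psiPart' v₁ v₂ x' ≠ some x'}), ((H.φ v₂).symm ⟨x', hSX2' x' hx'⟩).1 ∈ {x : V | (∀ i : ℕ, 1 ≤ i → i ≤ n → x ≠ a i) ∧ H.psiPart v₁ v₂ x ≠ some x} := by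
    intro x' hx'
    obtain ⟨h1', h2', x₁, x₂, kq1, kq2, kA1, kA2, kp1, kp2, ke1, ke2⟩ :=
      key' x' ((hbr' x').1 hx'.1)
    have hv : ((H.φ v₂).symm ⟨x', hSX2' x' hx'⟩).1 = x₂ := by
      rw [H.pphiInv_pos v₂ x' (hSX2' x' hx')] at kq2
      exact Option.some_injective _ kq2
    rw [hv]
    exact ⟨(hbr x₂).2 kA2, fun hcon => hx'.2 (ke2.mpr hcon)⟩
  have fwdY1 : ∀ x (hx : x ∈ {x : V | (∀ i : ℕ, 1 ≤ i → i ≤ n → x ≠ a i) ∧ H.psiPart v₁ v₂ x = some x}), (H.φ v₁ ⟨x, hSY1 x hx⟩).1 ∈ {x' : V' | (∀ i : ℕ, 1 ≤ i → i ≤ n → x' ≠ a' i) ∧ H.psiPart' v₁ v₂ x' = some x'} := by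
    intro x hx
    obtain ⟨h1, h2, x₁', x₂', kp1, kp2, kA1, kA2, ke0, ke1, ke2⟩ := key x ((hbr x).1 hx.1)
    have hv : (H.φ v₁ ⟨x, hSY1 x hx⟩).1 = x₁' := by
      rw [H.pphi_pos v₁ x (hSY1 x hx)] at kp1
      exact Option.some_injective _ kp1
    rw [hv]
    exact ⟨(hbr' x₁').2 kA1, ke1.mpr (ke0.mp hx.2)⟩
  have bwdY1 : ∀ x' (hx' : x' ∈ {x' : V' | (∀ i : ℕ, 1 ≤ i → i ≤ n → x' ≠ a' i) ∧ H.psiPart' v₁ v₂ x' = some x'}), ((H.φ v₁).symm ⟨x', hSY1' x' hx'⟩).1 ∈ {x : V | (∀ i : ℕ, 1 ≤ i → i ≤ n → x ≠ a i) ∧ H.psiPart v₁ v₂ x = some x} := by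
    intro x' hx'
    obtain ⟨h1', h2', x₁, x₂, kq1, kq2, kA1, kA2, kp1, kp2, ke1, ke2⟩ :=
      key' x' ((hbr' x').1 hx'.1)
    have hv : ((H.φ v₁).symm ⟨x', hSY1' x' hx'⟩).1 = x₁ := by
      rw [H.pphiInv_pos v₁ x' (hSY1' x' hx')] at kq1
      exact Option.some_injective _ kq1
    rw [hv]
    exact ⟨(hbr x₁).2 kA1, ke1.mp hx'.2⟩
  have fwdY2 : ∀ x (hx : x ∈ {x : V | (∀ i : ℕ, 1 ≤ i → i ≤ n → x ≠ a i) ∧ H.psiPart v₁ v₂ x = some x}), (H.φ v₂ ⟨x, hSY2 x hx⟩).1 ∈ {x' : V' | (∀ i : ℕ, 1 ≤ i → i ≤ n → x' ≠ a' i) ∧ H.psiPart' v₁ v₂ x' = some x'} := by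
    intro x hx
    obtain ⟨h1, h2, x₁', x₂', kp1, kp2, kA1, kA2, ke0, ke1, ke2⟩ := key x ((hbr x).1 hx.1)
    have hv : (H.φ v₂ ⟨x, hSY2 x hx⟩).1 = x₂' := by
      rw [H.pphi_pos v₂ x (hSY2 x hx)] at kp2
      exact Option.some_injective _ kp2
    rw [hv]
    exact ⟨(hbr' x₂').2 kA2, ke2.mpr (ke0.mp hx.2)⟩
  have bwdY2 : ∀ x' (hx' : x' ∈ {x' : V' | (∀ i : ℕ, 1 ≤ i → i ≤ n → x' ≠ a' i) ∧ H.psiPart' v₁ v₂ x' = some x'}), ((H.φ v₂).symm ⟨x', hSY2' x' hx'⟩).1 ∈ {x : V | (∀ i : ℕ, 1 ≤ i → i ≤ n → x ≠ a i) ∧ H.psiPart v₁ v₂ x = some x} := by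
    intro x' hx'
    obtain ⟨h1', h2', x₁, x₂, kq1, kq2, kA1, kA2, kp1, kp2, ke1, ke2⟩ :=
      key' x' ((hbr' x').1 hx'.1)
    have hv : ((H.φ v₂).symm ⟨x', hSY2' x' hx'⟩).1 = x₂ := by
      rw [H.pphiInv_pos v₂ x' (hSY2' x' hx')] at kq2
      exact Option.some_injective _ kq2
    rw [hv]
    exact ⟨(hbr x₂).2 kA2, ke2.mp hx'.2⟩
  obtain ⟨imgX1, isoX1⟩ := H.transfer v₁ _ _ hSX1 hSX1' fwdX1 bwdX1
  obtain ⟨imgX2, isoX2⟩ := H.transfer v₂ _ _ hSX2 hSX2' fwdX2 bwdX2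
  obtain ⟨imgY1, isoY1⟩ := H.transfer v₁ _ _ hSY1 hSY1' fwdY1 bwdY1
  obtain ⟨imgY2, isoY2⟩ := H.transfer v₂ _ _ hSY2 hSY2' fwdY2 bwdY2
  exact ⟨imgX1, imgX2, imgY1, imgY2, isoX1, isoX2, isoY1, isoY2⟩
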